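/- For every real q in [0,2] with q ≠ 1 and every x in [0,1], the q-Tsallis binary entropy satisfies Hqᵀ(1/2)·4x(1-x) ≤ Hqᵀ(x). -/

import Mathlib

open Real Set

private lemma hasDerivAt_plus (e t : ℝ) (h : (0:ℝ) < 1 + t) :
    HasDerivAt (fun s : ℝ => (1 + s) ^ e) (e * (1 + t) ^ (e - 1)) t := by
  have h1 : HasDerivAt (fun s : ℝ => 1 + s) 1 t := (hasDerivAt_id t).const_add 1
  have := h1.rpow_const (p := e) (Or.inl h.ne')
  simpa using this

private lemma hasDerivAt_minus (e t : ℝ) (h : (0:ℝ) < 1 - t) :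
    HasDerivAt (fun s : ℝ => (1 - s) ^ e) (-(e * (1 - t) ^ (e - 1))) t := by
  have h1 : HasDerivAt (fun s : ℝ => 1 - s) (-1) t := (hasDerivAt_id t).const_sub 1
  have := h1.rpow_const (p := e) (Or.inl h.ne')
  convert this using 1
  ring

private lemma contOn1 (e : ℝ) {s : Set ℝ} (h : ∀ x ∈ s, (1:ℝ) + x ≠ 0 ∨ 0 ≤ e) :
    ContinuousOn (fun x : ℝ => (1 + x) ^ e) s :=
  ((continuous_const.add continuous_id').continuousOn).rpow_const h

private lemma contOn2 (e : ℝ) {s : Set ℝ} (h : ∀ x ∈ s, (1:ℝ) - x ≠ 0 ∨ 0 ≤ e) :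
    ContinuousOn (fun x : ℝ => (1 - x) ^ e) s :=
  ((continuous_const.sub continuous_id').continuousOn).rpow_const h

-- key inequality, case 1 < q ≤ 2
private lemma keyA (q : ℝ) (hq1 : 1 < q) (hq2 : q ≤ 2) {t : ℝ} (ht0 : 0 ≤ t) (ht1 : t ≤ 1) :
    (1 + t) ^ q + (1 - t) ^ q ≤ 2 + (2 ^ q - 2) * t ^ 2 := by
  have c1 : ∀ e : ℝ, ContinuousOn (fun x : ℝ => (1+x)^e) (Ico (0:ℝ) 1) :=
    fun e => contOn1 e (fun x hx => Or.inl (show (0:ℝ) < 1 + x by linarith [hx.1]).ne')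
  have c2 : ∀ e : ℝ, ContinuousOn (fun x : ℝ => (1-x)^e) (Ico (0:ℝ) 1) :=
    fun e => contOn2 e (fun x hx => Or.inl (show (0:ℝ) < 1 - x by linarith [hx.2]).ne')
  -- derivative of θ
  have hθd : ∀ s ∈ Ioo (0:ℝ) 1, HasDerivAt
      (fun s : ℝ => s * ((q-1) * ((1+s)^(q-1-1) + (1-s)^(q-1-1))) - ((1+s)^(q-1) - (1-s)^(q-1)))
      (s * ((q-1) * ((q-1-1) * ((1+s)^(q-1-1-1) - (1-s)^(q-1-1-1))))) s := by
    intro s hs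
    have h1 : (0:ℝ) < 1 + s := by linarith [hs.1]
    have h2 : (0:ℝ) < 1 - s := by linarith [hs.2]
    have dψ := (hasDerivAt_plus (q-1) s h1).sub (hasDerivAt_minus (q-1) s h2)
    have dinner := ((hasDerivAt_plus (q-1-1) s h1).add (hasDerivAt_minus (q-1-1) s h2)).const_mul (q-1)
    have := ((hasDerivAt_id' (x := s)).mul dinner).sub dψ
    refine this.congr_deriv ?_
    simp only [Pi.add_apply]
    ring
  -- θ is monotone on [0,1), θ 0 = 0, hence θ ≥ 0
  have hθmono : MonotoneOn
      (fun s : ℝ => s * ((q-1) * ((1+s)^(q-1-1) + (1-s)^(q-1-1))) - ((1+s)^(q-1) - (1-s)^(q-1)))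
      (Ico (0:ℝ) 1) := by
    apply monotoneOn_of_deriv_nonneg (convex_Ico 0 1)
    · exact (continuousOn_id.mul (continuousOn_const.mul ((c1 _).add (c2 _)))).sub ((c1 _).sub (c2 _))
    · rw [interior_Ico]
      exact fun s hs => (hθd s hs).differentiableAt.differentiableWithinAt
    · rw [interior_Ico]
      intro s hs
      rw [(hθd s hs).deriv]
      have h1 : (0:ℝ) < 1 + s := by linarith [hs.1]
      have h2 : (0:ℝ) < 1 - s := by linarith [hs.2]
      have hb : (1+s)^(q-1-1-1) ≤ (1-s)^(q-1-1-1) :=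
        Real.rpow_le_rpow_of_nonpos h2 (by linarith [hs.1.le]) (by linarith)
      have hin : 0 ≤ (q-1-1) * ((1+s)^(q-1-1-1) - (1-s)^(q-1-1-1)) := by nlinarith [hb]
      exact mul_nonneg hs.1.le (mul_nonneg (by linarith) hin)
  have hθnn : ∀ s ∈ Ioo (0:ℝ) 1,
      0 ≤ s * ((q-1) * ((1+s)^(q-1-1) + (1-s)^(q-1-1))) - ((1+s)^(q-1) - (1-s)^(q-1)) := by
    intro s hs
    have := hθmono (Set.mem_Ico.2 ⟨le_rfl, one_pos⟩) (Set.mem_Ico.2 ⟨hs.1.le, hs.2⟩) hs.1.le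
    simpa using this
  -- ψ/t is monotone on (0,1)
  have hψd : ∀ s ∈ Ioo (0:ℝ) 1, HasDerivAt (fun s : ℝ => (1+s)^(q-1) - (1-s)^(q-1))
      ((q-1) * ((1+s)^(q-1-1) + (1-s)^(q-1-1))) s := by
    intro s hs
    have h1 : (0:ℝ) < 1 + s := by linarith [hs.1]
    have h2 : (0:ℝ) < 1 - s := by linarith [hs.2]
    have := (hasDerivAt_plus (q-1) s h1).sub (hasDerivAt_minus (q-1) s h2)
    refine this.congr_deriv ?_
    ring
  have hratio : MonotoneOn (fun s : ℝ => ((1+s)^(q-1) - (1-s)^(q-1)) / s) (Ioo (0:ℝ) 1) := by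
    apply monotoneOn_of_deriv_nonneg (convex_Ioo 0 1)
    · exact (((c1 _).mono Ioo_subset_Ico_self).sub ((c2 _).mono Ioo_subset_Ico_self)).div
        continuousOn_id (fun x hx => hx.1.ne')
    · rw [interior_Ioo]
      intro s hs
      exact ((hψd s hs).div (hasDerivAt_id' (x := s)) hs.1.ne').differentiableAt.differentiableWithinAt
    · rw [interior_Ioo]
      intro s hs
      rw [HasDerivAt.deriv (f := fun s => ((1+s)^(q-1) - (1-s)^(q-1)) / s) ((hψd s hs).div (hasDerivAt_id' (x := s)) hs.1.ne')]
      apply div_nonneg _ (by positivity)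
      have := hθnn s hs
      nlinarith [this]
  -- endpoint cases
  rcases eq_or_lt_of_le ht0 with h0 | ht0'
  · rw [← h0]; norm_num
  rcases eq_or_lt_of_le ht1 with h1 | ht1'
  · rw [h1]
    rw [show (1:ℝ) - 1 = 0 by ring, Real.zero_rpow (by linarith : q ≠ 0)]
    norm_num
  have htI : t ∈ Ioo (0:ℝ) 1 := ⟨ht0', ht1'⟩
  -- derivative of G
  have hGd : ∀ s ∈ Ioo (0:ℝ) 1, HasDerivAt
      (fun s : ℝ => (1+s)^q + (1-s)^q - (2 + (2^q - 2) * s^2))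
      (q * ((1+s)^(q-1) - (1-s)^(q-1)) - 2*(2^q-2)*s) s := by
    intro s hs
    have h1 : (0:ℝ) < 1 + s := by linarith [hs.1]
    have h2 : (0:ℝ) < 1 - s := by linarith [hs.2]
    have dq := (hasDerivAt_plus q s h1).add (hasDerivAt_minus q s h2)
    have dquad : HasDerivAt (fun s : ℝ => 2 + (2^q - 2) * s^2) ((2^q-2)*(2*s)) s := by
      have := ((hasDerivAt_pow 2 s).const_mul (2^q - 2)).const_add 2
      simpa using this
    have := dq.sub dquad
    refine this.congr_deriv ?_
    ring
  have cG : ContinuousOn (fun s : ℝ => (1+s)^q + (1-s)^q - (2 + (2^q - 2) * s^2)) (Icc (0:ℝ) 1) := by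
    apply ContinuousOn.sub
    · exact (contOn1 q (fun x hx => Or.inr (by linarith))).add
        (contOn2 q (fun x hx => Or.inr (by linarith)))
    · exact continuousOn_const.add (continuousOn_const.mul (continuousOn_pow 2))
  have hG0 : (fun s : ℝ => (1+s)^q + (1-s)^q - (2 + (2^q - 2) * s^2)) 0 = 0 := by norm_num
  have hG1 : (fun s : ℝ => (1+s)^q + (1-s)^q - (2 + (2^q - 2) * s^2)) 1 = 0 := by
    simp only []
    rw [show (1:ℝ) - 1 = 0 by ring, Real.zero_rpow (by linarith : q ≠ 0)]
    norm_num
  have key : (fun s : ℝ => (1+s)^q + (1-s)^q - (2 + (2^q - 2) * s^2)) t ≤ 0 := by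
    rcases le_or_gt (q * ((1+t)^(q-1) - (1-t)^(q-1))) (2*(2^q-2)*t) with hc | hc
    · -- G antitone on [0,t]
      have hanti : AntitoneOn (fun s : ℝ => (1+s)^q + (1-s)^q - (2 + (2^q - 2) * s^2)) (Icc 0 t) := by
        apply antitoneOn_of_deriv_nonpos (convex_Icc 0 t)
        · exact cG.mono (Icc_subset_Icc le_rfl ht1)
        · rw [interior_Icc]
          intro s hs
          exact (hGd s ⟨hs.1, lt_trans hs.2 ht1'⟩).differentiableAt.differentiableWithinAt
        · rw [interior_Icc]
          intro s hs
          have hsI : s ∈ Ioo (0:ℝ) 1 := ⟨hs.1, lt_trans hs.2 ht1'⟩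
          rw [(hGd s hsI).deriv]
          have hr := hratio hsI htI hs.2.le
          rw [div_le_div_iff₀ hsI.1 ht0'] at hr
          nlinarith [hr, hc, hsI.1, ht0', mul_le_mul_of_nonneg_left hr (by linarith : (0:ℝ) ≤ q),
            mul_le_mul_of_nonneg_right hc hsI.1.le]
      have := hanti (Set.left_mem_Icc.2 ht0) (Set.right_mem_Icc.2 ht0) ht0
      rw [hG0] at this
      exact this
    · -- G monotone on [t,1]
      have hmono : MonotoneOn (fun s : ℝ => (1+s)^q + (1-s)^q - (2 + (2^q - 2) * s^2)) (Icc t 1) := by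
        apply monotoneOn_of_deriv_nonneg (convex_Icc t 1)
        · exact cG.mono (Icc_subset_Icc ht0 le_rfl)
        · rw [interior_Icc]
          intro s hs
          exact (hGd s ⟨lt_trans ht0' hs.1, hs.2⟩).differentiableAt.differentiableWithinAt
        · rw [interior_Icc]
          intro s hs
          have hsI : s ∈ Ioo (0:ℝ) 1 := ⟨lt_trans ht0' hs.1, hs.2⟩
          rw [(hGd s hsI).deriv]
          have hr := hratio htI hsI hs.1.le
          rw [div_le_div_iff₀ ht0' hsI.1] at hr
          nlinarith [hr, hc, hsI.1, ht0', mul_le_mul_of_nonneg_left hr (by linarith : (0:ℝ) ≤ q),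
            mul_le_mul_of_nonneg_right hc.le hsI.1.le]
      have := hmono (Set.left_mem_Icc.2 ht1) (Set.right_mem_Icc.2 ht1) ht1
      rw [hG1] at this
      exact this
  simp only [] at key
  linarith [key]

-- key inequality, case 0 < q < 1
private lemma keyB (q : ℝ) (hq0 : 0 < q) (hq1 : q < 1) {t : ℝ} (ht0 : 0 ≤ t) (ht1 : t ≤ 1) :
    2 + (2 ^ q - 2) * t ^ 2 ≤ (1 + t) ^ q + (1 - t) ^ q := by
  have c1 : ∀ e : ℝ, ContinuousOn (fun x : ℝ => (1+x)^e) (Ico (0:ℝ) 1) :=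
    fun e => contOn1 e (fun x hx => Or.inl (show (0:ℝ) < 1 + x by linarith [hx.1]).ne')
  have c2 : ∀ e : ℝ, ContinuousOn (fun x : ℝ => (1-x)^e) (Ico (0:ℝ) 1) :=
    fun e => contOn2 e (fun x hx => Or.inl (show (0:ℝ) < 1 - x by linarith [hx.2]).ne')
  have hθd : ∀ s ∈ Ioo (0:ℝ) 1, HasDerivAt
      (fun s : ℝ => s * ((q-1) * ((1+s)^(q-1-1) + (1-s)^(q-1-1))) - ((1+s)^(q-1) - (1-s)^(q-1)))
      (s * ((q-1) * ((q-1-1) * ((1+s)^(q-1-1-1) - (1-s)^(q-1-1-1))))) s := by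
    intro s hs
    have h1 : (0:ℝ) < 1 + s := by linarith [hs.1]
    have h2 : (0:ℝ) < 1 - s := by linarith [hs.2]
    have dψ := (hasDerivAt_plus (q-1) s h1).sub (hasDerivAt_minus (q-1) s h2)
    have dinner := ((hasDerivAt_plus (q-1-1) s h1).add (hasDerivAt_minus (q-1-1) s h2)).const_mul (q-1)
    have := ((hasDerivAt_id' (x := s)).mul dinner).sub dψ
    refine this.congr_deriv ?_
    simp only [Pi.add_apply]
    ring
  -- θ is antitone on [0,1), θ 0 = 0, hence θ ≤ 0
  have hθmono : AntitoneOn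
      (fun s : ℝ => s * ((q-1) * ((1+s)^(q-1-1) + (1-s)^(q-1-1))) - ((1+s)^(q-1) - (1-s)^(q-1)))
      (Ico (0:ℝ) 1) := by
    apply antitoneOn_of_deriv_nonpos (convex_Ico 0 1)
    · exact (continuousOn_id.mul (continuousOn_const.mul ((c1 _).add (c2 _)))).sub ((c1 _).sub (c2 _))
    · rw [interior_Ico]
      exact fun s hs => (hθd s hs).differentiableAt.differentiableWithinAt
    · rw [interior_Ico]
      intro s hs
      rw [(hθd s hs).deriv]
      have h1 : (0:ℝ) < 1 + s := by linarith [hs.1]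
      have h2 : (0:ℝ) < 1 - s := by linarith [hs.2]
      have hb : (1+s)^(q-1-1-1) ≤ (1-s)^(q-1-1-1) :=
        Real.rpow_le_rpow_of_nonpos h2 (by linarith [hs.1.le]) (by linarith)
      have hin : 0 ≤ (q-1-1) * ((1+s)^(q-1-1-1) - (1-s)^(q-1-1-1)) := by nlinarith [hb]
      have : (q-1) * ((q-1-1) * ((1+s)^(q-1-1-1) - (1-s)^(q-1-1-1))) ≤ 0 :=
        mul_nonpos_of_nonpos_of_nonneg (by linarith) hin
      exact mul_nonpos_of_nonneg_of_nonpos hs.1.le this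
  have hθnp : ∀ s ∈ Ioo (0:ℝ) 1,
      s * ((q-1) * ((1+s)^(q-1-1) + (1-s)^(q-1-1))) - ((1+s)^(q-1) - (1-s)^(q-1)) ≤ 0 := by
    intro s hs
    have := hθmono (Set.mem_Ico.2 ⟨le_rfl, one_pos⟩) (Set.mem_Ico.2 ⟨hs.1.le, hs.2⟩) hs.1.le
    simpa using this
  have hψd : ∀ s ∈ Ioo (0:ℝ) 1, HasDerivAt (fun s : ℝ => (1+s)^(q-1) - (1-s)^(q-1))
      ((q-1) * ((1+s)^(q-1-1) + (1-s)^(q-1-1))) s := by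
    intro s hs
    have h1 : (0:ℝ) < 1 + s := by linarith [hs.1]
    have h2 : (0:ℝ) < 1 - s := by linarith [hs.2]
    have := (hasDerivAt_plus (q-1) s h1).sub (hasDerivAt_minus (q-1) s h2)
    refine this.congr_deriv ?_
    ring
  have hratio : AntitoneOn (fun s : ℝ => ((1+s)^(q-1) - (1-s)^(q-1)) / s) (Ioo (0:ℝ) 1) := by
    apply antitoneOn_of_deriv_nonpos (convex_Ioo 0 1)
    · exact (((c1 _).mono Ioo_subset_Ico_self).sub ((c2 _).mono Ioo_subset_Ico_self)).div
        continuousOn_id (fun x hx => hx.1.ne')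
    · rw [interior_Ioo]
      intro s hs
      exact ((hψd s hs).div (hasDerivAt_id' (x := s)) hs.1.ne').differentiableAt.differentiableWithinAt
    · rw [interior_Ioo]
      intro s hs
      rw [HasDerivAt.deriv (f := fun s => ((1+s)^(q-1) - (1-s)^(q-1)) / s) ((hψd s hs).div (hasDerivAt_id' (x := s)) hs.1.ne')]
      apply div_nonpos_of_nonpos_of_nonneg _ (by positivity)
      have := hθnp s hs
      nlinarith [this]
  rcases eq_or_lt_of_le ht0 with h0 | ht0'
  · rw [← h0]; norm_num
  rcases eq_or_lt_of_le ht1 with h1 | ht1'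
  · rw [h1]
    rw [show (1:ℝ) - 1 = 0 by ring, Real.zero_rpow (by linarith : q ≠ 0)]
    norm_num
  have htI : t ∈ Ioo (0:ℝ) 1 := ⟨ht0', ht1'⟩
  have hGd : ∀ s ∈ Ioo (0:ℝ) 1, HasDerivAt
      (fun s : ℝ => (1+s)^q + (1-s)^q - (2 + (2^q - 2) * s^2))
      (q * ((1+s)^(q-1) - (1-s)^(q-1)) - 2*(2^q-2)*s) s := by
    intro s hs
    have h1 : (0:ℝ) < 1 + s := by linarith [hs.1]
    have h2 : (0:ℝ) < 1 - s := by linarith [hs.2]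
    have dq := (hasDerivAt_plus q s h1).add (hasDerivAt_minus q s h2)
    have dquad : HasDerivAt (fun s : ℝ => 2 + (2^q - 2) * s^2) ((2^q-2)*(2*s)) s := by
      have := ((hasDerivAt_pow 2 s).const_mul (2^q - 2)).const_add 2
      simpa using this
    have := dq.sub dquad
    refine this.congr_deriv ?_
    ring
  have cG : ContinuousOn (fun s : ℝ => (1+s)^q + (1-s)^q - (2 + (2^q - 2) * s^2)) (Icc (0:ℝ) 1) := by
    apply ContinuousOn.sub
    · exact (contOn1 q (fun x hx => Or.inr (by linarith))).add
        (contOn2 q (fun x hx => Or.inr (by linarith)))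
    · exact continuousOn_const.add (continuousOn_const.mul (continuousOn_pow 2))
  have hG0 : (fun s : ℝ => (1+s)^q + (1-s)^q - (2 + (2^q - 2) * s^2)) 0 = 0 := by norm_num
  have hG1 : (fun s : ℝ => (1+s)^q + (1-s)^q - (2 + (2^q - 2) * s^2)) 1 = 0 := by
    simp only []
    rw [show (1:ℝ) - 1 = 0 by ring, Real.zero_rpow (by linarith : q ≠ 0)]
    norm_num
  have key : 0 ≤ (fun s : ℝ => (1+s)^q + (1-s)^q - (2 + (2^q - 2) * s^2)) t := by
    rcases le_or_gt (q * ((1+t)^(q-1) - (1-t)^(q-1))) (2*(2^q-2)*t) with hc | hc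
    · -- G antitone on [t,1] : G t ≥ G 1 = 0
      have hanti : AntitoneOn (fun s : ℝ => (1+s)^q + (1-s)^q - (2 + (2^q - 2) * s^2)) (Icc t 1) := by
        apply antitoneOn_of_deriv_nonpos (convex_Icc t 1)
        · exact cG.mono (Icc_subset_Icc ht0 le_rfl)
        · rw [interior_Icc]
          intro s hs
          exact (hGd s ⟨lt_trans ht0' hs.1, hs.2⟩).differentiableAt.differentiableWithinAt
        · rw [interior_Icc]
          intro s hs
          have hsI : s ∈ Ioo (0:ℝ) 1 := ⟨lt_trans ht0' hs.1, hs.2⟩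
          rw [(hGd s hsI).deriv]
          have hr := hratio htI hsI hs.1.le
          rw [div_le_div_iff₀ hsI.1 ht0'] at hr
          nlinarith [hr, hc, hsI.1, ht0', mul_le_mul_of_nonneg_left hr (by linarith : (0:ℝ) ≤ q),
            mul_le_mul_of_nonneg_right hc hsI.1.le]
      have := hanti (Set.left_mem_Icc.2 ht1) (Set.right_mem_Icc.2 ht1) ht1
      rw [hG1] at this
      exact this
    · -- G monotone on [0,t] : G t ≥ G 0 = 0
      have hmono : MonotoneOn (fun s : ℝ => (1+s)^q + (1-s)^q - (2 + (2^q - 2) * s^2)) (Icc 0 t) := by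
        apply monotoneOn_of_deriv_nonneg (convex_Icc 0 t)
        · exact cG.mono (Icc_subset_Icc le_rfl ht1)
        · rw [interior_Icc]
          intro s hs
          exact (hGd s ⟨hs.1, lt_trans hs.2 ht1'⟩).differentiableAt.differentiableWithinAt
        · rw [interior_Icc]
          intro s hs
          have hsI : s ∈ Ioo (0:ℝ) 1 := ⟨hs.1, lt_trans hs.2 ht1'⟩
          rw [(hGd s hsI).deriv]
          have hr := hratio hsI htI hs.2.le
          rw [div_le_div_iff₀ ht0' hsI.1] at hr
          nlinarith [hr, hc, hsI.1, ht0', mul_le_mul_of_nonneg_left hr (by linarith : (0:ℝ) ≤ q),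
            mul_le_mul_of_nonneg_right hc.le hsI.1.le]
      have := hmono (Set.left_mem_Icc.2 ht0) (Set.right_mem_Icc.2 ht0) ht0
      rw [hG0] at this
      exact this
  simp only [] at key
  linarith [key]

/-- The `q`-Tsallis binary entropy `Hqᵀ(x) = (1 - x^q - (1-x)^q)/(q-1)`. -/
noncomputable def tsallisBin (q x : ℝ) : ℝ := (1 - x ^ q - (1 - x) ^ q) / (q - 1)

/-- For `q ∈ [0,2]`, `q ≠ 1`, and `x ∈ [0,1]`, `Hqᵀ(1/2)·4x(1-x) ≤ Hqᵀ(x)`. -/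
theorem tsallis_binary_entropy_lower_bound (q x : ℝ) (hq0 : 0 ≤ q) (hq2 : q ≤ 2)
    (hq1 : q ≠ 1) (hx0 : 0 ≤ x) (hx1 : x ≤ 1) :
    tsallisBin q (1 / 2) * (4 * x * (1 - x)) ≤ tsallisBin q x := by
  unfold tsallisBin
  have hx' : (0:ℝ) ≤ 1 - x := by linarith
  rcases eq_or_lt_of_le hq0 with h0 | hq0'
  · -- q = 0
    rw [← h0]
    simp only [Real.rpow_zero]
    norm_num
    nlinarith [sq_nonneg (2*x - 1)]
  have hApos : (0:ℝ) < 2 ^ q := Real.rpow_pos_of_pos two_pos q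
  have hhalf : ((1:ℝ)/2) ^ q = 1 / 2 ^ q := by
    rw [Real.div_rpow (by norm_num) (by norm_num), Real.one_rpow]
  rw [show (1:ℝ) - 1/2 = 1/2 by norm_num, hhalf, div_mul_eq_mul_div]
  have e1 : 1 - 1/(2:ℝ)^q - 1/(2:ℝ)^q = ((2:ℝ)^q - 2)/2^q := by
    field_simp
    ring
  have hfs : (1 - 1/(2:ℝ)^q - 1/(2:ℝ)^q) * (4*x*(1-x)) = (((2:ℝ)^q - 2) * (4*x*(1-x))) / 2^q := by
    rw [e1]; ring
  rcases lt_or_gt_of_ne hq1 with hqlt | hqgt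
  · -- 0 < q < 1
    have hkey : 2 + (2^q - 2) * (1-2*x)^2 ≤ 2^q * (1-x)^q + 2^q * x^q := by
      rcases le_total x (1/2) with hxh | hxh
      · have h := keyB q hq0' hqlt (t := 1 - 2*x) (by linarith) (by linarith)
        rw [show (1:ℝ) + (1-2*x) = 2*(1-x) by ring, show (1:ℝ) - (1-2*x) = 2*x by ring] at h
        rw [Real.mul_rpow (by norm_num) hx', Real.mul_rpow (by norm_num) hx0] at h
        linarith [h]
      · have h := keyB q hq0' hqlt (t := 2*x - 1) (by linarith) (by linarith)
        rw [show (1:ℝ) + (2*x-1) = 2*x by ring, show (1:ℝ) - (2*x-1) = 2*(1-x) by ring] at h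
        rw [Real.mul_rpow (by norm_num) hx', Real.mul_rpow (by norm_num) hx0] at h
        nlinarith [h]
    rw [div_le_div_right_of_neg (by linarith : q - 1 < 0)]
    rw [hfs, le_div_iff₀ hApos]
    nlinarith [hkey]
  · -- 1 < q ≤ 2
    have hkey : 2^q * (1-x)^q + 2^q * x^q ≤ 2 + (2^q - 2) * (1-2*x)^2 := by
      rcases le_total x (1/2) with hxh | hxh
      · have h := keyA q hqgt hq2 (t := 1 - 2*x) (by linarith) (by linarith)
        rw [show (1:ℝ) + (1-2*x) = 2*(1-x) by ring, show (1:ℝ) - (1-2*x) = 2*x by ring] at h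
        rw [Real.mul_rpow (by norm_num) hx', Real.mul_rpow (by norm_num) hx0] at h
        linarith [h]
      · have h := keyA q hqgt hq2 (t := 2*x - 1) (by linarith) (by linarith)
        rw [show (1:ℝ) + (2*x-1) = 2*x by ring, show (1:ℝ) - (2*x-1) = 2*(1-x) by ring] at h
        rw [Real.mul_rpow (by norm_num) hx', Real.mul_rpow (by norm_num) hx0] at h
        nlinarith [h]
    rw [div_le_div_iff_of_pos_right (by linarith : (0:ℝ) < q - 1)]
    rw [hfs, div_le_iff₀ hApos]
    nlinarith [hkey]
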